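/- Let a be a monomial ideal of A = K[X_1,...,X_n] and D a distraction of A. Then the ideal D(a), generated by the distractions of a monomial generating set of a, has the same Hilbert function as a: Hilb(A/a) = Hilb(A/D(a)). -/

import Mathlib

open MvPolynomial
set_option synthInstance.maxHeartbeats 1000000
set_option maxHeartbeats 2000000
noncomputable section

variable (K : Type) [Field K] (n : ℕ)



/-- The `K`-dimension of the degree-`d` graded component of the homogeneous ideal `J`. -/
noncomputable def idealHF (J : Ideal (MvPolynomial (Fin n) K)) (d : ℕ) : ℕ :=
  Module.finrank K ↥(J.restrictScalars K ⊓ homogeneousSubmodule (Fin n) K d)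

/-- An ideal is homogeneous (w.r.t. the standard grading) iff it contains all
homogeneous components of its elements. -/
def IsHomog (J : Ideal (MvPolynomial (Fin n) K)) : Prop :=
  ∀ f ∈ J, ∀ d : ℕ, homogeneousComponent d f ∈ J

/-- The Hilbert function, in degree `d`, of the image of the homogeneous ideal `J ⊇ a`
in the quotient ring `A/a`: the dimension of `(J_d + a_d)/a_d`. -/
noncomputable def quotHF (a J : Ideal (MvPolynomial (Fin n) K)) (d : ℕ) : ℕ :=
  Module.finrank K ↥(Submodule.map (a.restrictScalars K).mkQ
    (J.restrictScalars K ⊓ homogeneousSubmodule (Fin n) K d))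

/-- The Hilbert function of the quotient ring `A/a` itself. -/
noncomputable def ringHF (a : Ideal (MvPolynomial (Fin n) K)) (d : ℕ) : ℕ :=
  Module.finrank K ↥(Submodule.map (a.restrictScalars K).mkQ
    (homogeneousSubmodule (Fin n) K d))

/-- The set of Hilbert functions of homogeneous ideals of `A/a`. -/
def HFset (a : Ideal (MvPolynomial (Fin n) K)) : Set (ℕ → ℕ) :=
  {H | ∃ J : Ideal (MvPolynomial (Fin n) K), IsHomog K n J ∧ a ≤ J ∧ H = quotHF K n a J}

/-- An embedding of Hilbert functions for the standard graded algebra `A/a`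
(ideals of `A/a` being represented by their preimages in `A`):
an assignment `eps` of ideals of `A` containing `a` to Hilbert functions, which
preserves Hilbert functions and the (pointwise, resp. inclusion) orders.  Injectivity
is automatic since `eps H` has Hilbert function `H`. -/
structure HFEmbedding (a : Ideal (MvPolynomial (Fin n) K)) : Type where
  eps : (ℕ → ℕ) → Ideal (MvPolynomial (Fin n) K)
  homog : ∀ J : Ideal (MvPolynomial (Fin n) K), IsHomog K n J → a ≤ J →
    IsHomog K n (eps (quotHF K n a J))
  le : ∀ J : Ideal (MvPolynomial (Fin n) K), IsHomog K n J → a ≤ J →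
    a ≤ eps (quotHF K n a J)
  hf : ∀ J : Ideal (MvPolynomial (Fin n) K), IsHomog K n J → a ≤ J →
    quotHF K n a (eps (quotHF K n a J)) = quotHF K n a J
  mono : ∀ J J' : Ideal (MvPolynomial (Fin n) K), IsHomog K n J → a ≤ J →
    IsHomog K n J' → a ≤ J' → (∀ d, quotHF K n a J d ≤ quotHF K n a J' d) →
    eps (quotHF K n a J) ≤ eps (quotHF K n a J')

/-- A monomial ideal: an ideal generated by monomials. -/
def IsMonomialIdeal (J : Ideal (MvPolynomial (Fin n) K)) : Prop :=
  ∃ S : Set (Fin n →₀ ℕ), J = Ideal.span ((fun s => monomial s (1 : K)) '' S)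

/-- The monomial ideal generated by the set of exponent vectors `S`. -/
def monIdeal (S : Set (Fin n →₀ ℕ)) : Ideal (MvPolynomial (Fin n) K) :=
  Ideal.span ((fun s => monomial s (1 : K)) '' S)

/-- An embedding is monomial if the preimage in `A` of every ideal in its image is
a monomial ideal. -/
def HFEmbedding.IsMonomial {a : Ideal (MvPolynomial (Fin n) K)} (E : HFEmbedding K n a) : Prop :=
  ∀ J : Ideal (MvPolynomial (Fin n) K), IsHomog K n J → a ≤ J →
    IsMonomialIdeal K n (E.eps (quotHF K n a J))

/-- A distraction of `A = K[X_1,…,X_n]`: an `n × ℕ` matrix of linear forms such that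
any transversal choice of one entry from each row spans `A_1`, with rows eventually
constant. -/
structure Distraction : Type where
  l : Fin n → ℕ → MvPolynomial (Fin n) K
  homog : ∀ i j, (l i j).IsHomogeneous 1
  span : ∀ c : Fin n → ℕ,
    Submodule.span K (Set.range fun i => l i (c i)) = homogeneousSubmodule (Fin n) K 1
  eventually : ∃ N : ℕ, ∀ i, ∀ j ≥ N, l i j = l i N

/-- The distraction of the monomial with exponent vector `s`. -/
def Distraction.distractMon (D : Distraction K n) (s : Fin n →₀ ℕ) :
    MvPolynomial (Fin n) K :=
  ∏ i : Fin n, ∏ j ∈ Finset.range (s i), D.l i j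

/-- `b` is the distraction under `D` of the monomial ideal `a`:  `b` is generated by the
distractions of a monomial system of generators of `a`. -/
def IsDistractionOf (b a : Ideal (MvPolynomial (Fin n) K)) (D : Distraction K n) : Prop :=
  ∃ S : Set (Fin n →₀ ℕ), a = monIdeal K n S ∧
    b = Ideal.span (D.distractMon '' S)



/-- Degree-`d` graded piece of the quotient ring `A/J`. -/
noncomputable def qdeg (J : Ideal (MvPolynomial (Fin n) K)) (d : ℕ) :
    Submodule K (MvPolynomial (Fin n) K ⧸ J) :=
  Submodule.map (Ideal.Quotient.mkₐ K J).toLinearMap (homogeneousSubmodule (Fin n) K d)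

/-- The Koszul complex of the sequence `X_1, …, X_n` on `A/J`, all homological degrees at
once: functions from subsets of variables to `A/J`, the summand indexed by `s` being
`(A/J)·e_s` with `e_s` the wedge of the `e_i`, `i ∈ s`. -/
noncomputable def koszulDiff (J : Ideal (MvPolynomial (Fin n) K)) :
    (Finset (Fin n) → MvPolynomial (Fin n) K ⧸ J) →ₗ[K]
    (Finset (Fin n) → MvPolynomial (Fin n) K ⧸ J) :=
  LinearMap.pi fun s => ∑ k ∈ sᶜ,
    ((-1 : K) ^ (s.filter (fun j => j < k)).card) •
      ((LinearMap.mulLeft K (Ideal.Quotient.mk J (X k))).comp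
        (LinearMap.proj (insert k s)))

/-- The piece of the Koszul complex of homological degree `i` and internal degree `j`. -/
noncomputable def koszulGraded (J : Ideal (MvPolynomial (Fin n) K)) (i j : ℕ) :
    Submodule K (Finset (Fin n) → MvPolynomial (Fin n) K ⧸ J) :=
  Submodule.pi Set.univ fun s =>
    if s.card = i ∧ i ≤ j then qdeg K n J (j - i) else ⊥

/-- The graded Betti number `β^A_{ij}(A/J) = dim_K Tor_i^A(A/J, K)_j`, computed as the
internal degree `j` part of the `i`-th Koszul homology of `A/J`. -/
noncomputable def gradedBetti (J : Ideal (MvPolynomial (Fin n) K)) (i j : ℕ) : ℕ :=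
  Module.finrank K ↥(Submodule.map
    (Submodule.mkQ (Submodule.map (koszulDiff K n J) (koszulGraded K n J (i + 1) j)))
    (koszulGraded K n J i j ⊓ LinearMap.ker (koszulDiff K n J)))


section Cech
variable (K : Type) [Field K] {n : ℕ} (R : Type) [CommRing R] [Algebra K R]
  (x : Fin n → R)

/-- Product of the elements indexed by `T`. -/
def vprod (T : Finset (Fin n)) : R := ∏ i ∈ T, x i

/-- A summand `R_{x_T}` of the (extended) Čech complex of `R` on `x_1, …, x_n`. -/
abbrev cechSummand (T : Finset (Fin n)) : Type :=
  Localization (Submonoid.powers (vprod R x T))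

lemma cech_isUnit {S T : Finset (Fin n)} (h : S ⊆ T)
    (y : Submonoid.powers (vprod R x S)) :
    IsUnit (algebraMap R (cechSummand R x T) y) := by
  obtain ⟨k, hk⟩ := y.2
  have hdvd : vprod R x S ∣ vprod R x T :=
    ⟨∏ i ∈ T \ S, x i, by
      rw [vprod, vprod, ← Finset.prod_union Finset.disjoint_sdiff,
        Finset.union_sdiff_of_subset h]⟩
  obtain ⟨c, hc⟩ := hdvd
  have hS : IsUnit (algebraMap R (cechSummand R x T) (vprod R x S)) := by
    refine isUnit_of_mul_isUnit_left (y := algebraMap R (cechSummand R x T) c) ?_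
    rw [← map_mul, ← hc]
    exact IsLocalization.map_units (cechSummand R x T) ⟨vprod R x T, Submonoid.mem_powers _⟩
  have h2 : (y : R) = vprod R x S ^ k := hk.symm
  rw [h2, map_pow]
  exact hS.pow k

/-- The localization map between Čech summands, for `S ⊆ T`. -/
def cechRes {S T : Finset (Fin n)} (h : S ⊆ T) :
    cechSummand R x S →ₗ[K] cechSummand R x T :=
  { toFun := IsLocalization.lift (M := Submonoid.powers (vprod R x S))
      (g := algebraMap R (cechSummand R x T)) (cech_isUnit R x h)
    map_add' := fun a b => map_add _ a b
    map_smul' := by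
      intro c a
      simp only [RingHom.id_apply]
      rw [Algebra.smul_def, map_mul, Algebra.smul_def]
      congr 1
      rw [IsScalarTower.algebraMap_apply K R (cechSummand R x S) c,
        IsLocalization.lift_eq, ← IsScalarTower.algebraMap_apply] }

/-- The total space of the (extended) Čech complex. -/
abbrev cechSpace : Type := ∀ T : Finset (Fin n), cechSummand R x T

/-- The Čech differential (all cohomological degrees at once). -/
def cechDiff : cechSpace R x →ₗ[K] cechSpace R x :=
  LinearMap.pi fun T => ∑ k ∈ T.attach,
    ((-1 : K) ^ ((T.1.erase k.1).filter (fun j => j < k.1)).card) •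
      ((cechRes K R x (Finset.erase_subset k.1 T)).comp
        (LinearMap.proj (T.erase k.1)))

variable (deg : ℕ → Submodule K R)

/-- The degree-`j` graded piece of `R_{x_T}` (for `x_i` of degree one): spanned by
fractions `m / x_T^k` with `m` homogeneous of degree `j + k·|T|`. -/
def cechSummandDeg (T : Finset (Fin n)) (j : ℤ) : Submodule K (cechSummand R x T) :=
  Submodule.span K { y | ∃ (k : ℕ) (m : R) (d : ℕ),
    (d : ℤ) = j + k * T.card ∧ m ∈ deg d ∧
    y = Localization.mk m ⟨vprod R x T ^ k, pow_mem (Submonoid.mem_powers _) k⟩ }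

/-- The piece of the Čech complex of cohomological degree `i` and internal degree `j`. -/
def cechGraded (i : ℕ) (j : ℤ) : Submodule K (cechSpace R x) :=
  Submodule.pi Set.univ fun T => if T.card = i then cechSummandDeg K R x deg T j else ⊥

/-- The dimension of the degree-`j` piece of the `i`-th cohomology of the (extended)
Čech complex of `R` on `x`. -/
def cechHilb (i : ℕ) (j : ℤ) : ℕ :=
  Module.finrank K ↥(Submodule.map
    (Submodule.mkQ (Submodule.map (cechDiff K R x) (cechGraded K R x deg (i - 1) j)))
    (cechGraded K R x deg i j ⊓ LinearMap.ker (cechDiff K R x)))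

end Cech


variable (K : Type) [Field K] (n : ℕ)

/-- `dim_K H^i_m(A/J)_j`: the degree-`j` part of the `i`-th local cohomology of `A/J`
supported at the graded maximal ideal `m = (X_1,…,X_n)`, computed via the (extended)
Čech complex of `A/J` on the variables. -/
noncomputable def lcHilb (J : Ideal (MvPolynomial (Fin n) K)) (i : ℕ) (j : ℤ) : ℕ :=
  cechHilb K (MvPolynomial (Fin n) K ⧸ J)
    (fun v => Ideal.Quotient.mk J (MvPolynomial.X v)) (qdeg K n J) i j

/-- A lex-segment ideal: a monomial ideal which, in each degree, is spanned by an
initial segment of monomials in the lexicographic order (with `X_1 > X_2 > ⋯`). -/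
def IsLexIdeal (J : Ideal (MvPolynomial (Fin n) K)) : Prop :=
  IsMonomialIdeal K n J ∧ ∀ s t : Fin n →₀ ℕ,
    (s.sum fun _ e => e) = (t.sum fun _ e => e) →
    monomial s (1 : K) ∈ J →
    (∃ i : Fin n, (∀ v : Fin n, v < i → s v = t v) ∧ s i < t i) →
    monomial t (1 : K) ∈ J

/-- `E` is the lex-embedding of `A/a`: the image of `E` consists exactly of the images
in `A/a` of lex-segment ideals of `A`. -/
def IsLexEmbedding {a : Ideal (MvPolynomial (Fin n) K)} (E : HFEmbedding K n a) : Prop :=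
  (∀ J : Ideal (MvPolynomial (Fin n) K), IsHomog K n J → a ≤ J →
    ∃ L', IsLexIdeal K n L' ∧ E.eps (quotHF K n a J) = a ⊔ L') ∧
  (∀ L' : Ideal (MvPolynomial (Fin n) K), IsLexIdeal K n L' →
    E.eps (quotHF K n a (a ⊔ L')) = a ⊔ L')

/-- `A/a` has the lex-embedding, i.e. `A/a` is Macaulay-lex. -/
def HasLexEmbedding (a : Ideal (MvPolynomial (Fin n) K)) : Prop :=
  ∃ E : HFEmbedding K n a, IsLexEmbedding K n E

/-- A piecewise lex-segment ideal: a sum of extensions to `A` of lex-segment ideals of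
the subrings `K[X_1,…,X_i]`. -/
def IsPiecewiseLex (L : Ideal (MvPolynomial (Fin n) K)) : Prop :=
  ∃ Ls : Fin n → Ideal (MvPolynomial (Fin n) K),
    L = ⨆ i, Ls i ∧ ∀ i : Fin n,
      ∃ L0 : Ideal (MvPolynomial (Fin ((i : ℕ) + 1)) K),
        IsLexIdeal K ((i : ℕ) + 1) L0 ∧
        Ls i = Ideal.map
          (rename (Fin.castLE i.isLt) :
            MvPolynomial (Fin ((i : ℕ) + 1)) K →ₐ[K] MvPolynomial (Fin n) K) L0

/-- A pure powers ideal `(X_1^{d_1}, …, X_r^{d_r})` with `d_1 ≤ ⋯ ≤ d_r`. -/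
def IsPurePowers (P : Ideal (MvPolynomial (Fin n) K)) : Prop :=
  ∃ (r : ℕ) (hr : r ≤ n) (d : Fin r → ℕ), Monotone d ∧
    P = Ideal.span (Set.range fun i : Fin r => X (Fin.castLE hr i) ^ d i)

/-- A Shakin ideal: the sum of a piecewise lex-segment ideal and a pure powers ideal. -/
def IsShakin (a : Ideal (MvPolynomial (Fin n) K)) : Prop :=
  ∃ L P : Ideal (MvPolynomial (Fin n) K),
    IsPiecewiseLex K n L ∧ IsPurePowers K n P ∧ a = L ⊔ P

/-- `(A/b, A/a, E)` is Betti extremal. -/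
def IsBettiExtremalPair (b a : Ideal (MvPolynomial (Fin n) K)) (E : HFEmbedding K n a) :
    Prop :=
  ∀ J : Ideal (MvPolynomial (Fin n) K), IsHomog K n J → b ≤ J → ∀ i j : ℕ,
    gradedBetti K n J i j ≤ gradedBetti K n (E.eps (quotHF K n b J)) i j

/-- `(A/b, A/a, E)` is (local) cohomology extremal. -/
def IsCohomologyExtremalPair (b a : Ideal (MvPolynomial (Fin n) K))
    (E : HFEmbedding K n a) : Prop :=
  ∀ J : Ideal (MvPolynomial (Fin n) K), IsHomog K n J → b ≤ J → ∀ (i : ℕ) (j : ℤ),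
    lcHilb K n J i j ≤ lcHilb K n (E.eps (quotHF K n b J)) i j

/-- The embedding `E_D` of `A/b` is the one induced by the distraction `D` and the
lex-embedding `E` of `A/a`: it sends each Hilbert function to the image of the
distraction of the corresponding a-plus-lex ideal. -/
def IsInducedByDistraction {b a : Ideal (MvPolynomial (Fin n) K)}
    (E_D : HFEmbedding K n b) (E : HFEmbedding K n a) (D : Distraction K n) : Prop :=
  ∀ J : Ideal (MvPolynomial (Fin n) K), IsHomog K n J → b ≤ J →
    ∃ L', IsLexIdeal K n L' ∧ E.eps (quotHF K n b J) = a ⊔ L' ∧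
      IsDistractionOf K n (E_D.eps (quotHF K n b J)) (a ⊔ L') D

/-- An `X_n`-stable ideal of `R = (Ā/ā)[X_n]` (ideals represented by their preimages in
`A = K[X_1,…,X_{n+1}]`, with `Ā = K[X_1,…,X_n]` and `X_n` the last variable):
`I = ⊕_d J_{[d]} X_n^d` with each `J_{[d]}` an ideal of `Ā` containing `ā` and
`J_{[d+1]}·m_R ⊆ J_{[d]}`. -/
def IsXnStable (abar : Ideal (MvPolynomial (Fin n) K))
    (I : Ideal (MvPolynomial (Fin (n + 1)) K)) : Prop :=
  ∃ Js : ℕ → Ideal (MvPolynomial (Fin n) K),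
    (∀ d, IsHomog K n (Js d) ∧ abar ≤ Js d) ∧
    (∀ d, Js d ≤ Js (d + 1)) ∧
    (∀ d (v : Fin n), ∀ f ∈ Js (d + 1), X v * f ∈ Js d) ∧
    I = ⨆ d : ℕ, Ideal.map
        (rename Fin.castSucc : MvPolynomial (Fin n) K →ₐ[K] MvPolynomial (Fin (n + 1)) K)
        (Js d) * Ideal.span {X (Fin.last n) ^ d}


/-- The extension `āA` of an ideal `ā ⊆ K[X_1,…,X_n]` to `A = K[X_1,…,X_{n+1}]`
(so that `A/āA ≅ (Ā/ā)[X_{n+1}]`). -/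
noncomputable def extIdeal (abar : Ideal (MvPolynomial (Fin n) K)) :
    Ideal (MvPolynomial (Fin (n + 1)) K) :=
  Ideal.map
    (rename Fin.castSucc : MvPolynomial (Fin n) K →ₐ[K] MvPolynomial (Fin (n + 1)) K)
    abar

/-- The ideal `(X_{n+1}^e)`, with `e ∈ ℕ ∪ {∞}` (`none = ∞`, giving the zero ideal). -/
noncomputable def powIdealOpt (e : Option ℕ) : Ideal (MvPolynomial (Fin (n + 1)) K) :=
  e.elim ⊥ fun k => Ideal.span {X (Fin.last n) ^ k}




section DPHAux
variable {K n}

/-- `D.distractMon` as a plain function (avoiding dot-notation argument issues). -/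
def dm (D : Distraction K n) : (Fin n →₀ ℕ) → MvPolynomial (Fin n) K := D.distractMon

lemma dm_apply (D : Distraction K n) (u : Fin n →₀ ℕ) :
    dm D u = ∏ i : Fin n, ∏ j ∈ Finset.range (u i), D.l i j := rfl

lemma dph_degree_eq (u : Fin n →₀ ℕ) : u.degree = ∑ i : Fin n, u i :=
  Finset.sum_subset (Finset.subset_univ _)
    (fun i _ hi => Finsupp.notMem_support_iff.mp hi)

lemma dph_distractMon_homog (D : Distraction K n) (u : Fin n →₀ ℕ) :
    (dm D u).IsHomogeneous u.degree := by
  have h := MvPolynomial.IsHomogeneous.prod Finset.univ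
    (fun i => ∏ j ∈ Finset.range (u i), D.l i j) (fun i => u i) (fun i _ => by
      have h2 := MvPolynomial.IsHomogeneous.prod (Finset.range (u i)) (fun j => D.l i j)
        (fun _ => 1) (fun j _ => D.homog i j)
      simpa using h2)
  simpa [dm_apply, dph_degree_eq] using h

lemma dph_distractMon_zero (D : Distraction K n) : dm D 0 = 1 := by
  simp [dm_apply]

lemma dph_distractMon_add_single (D : Distraction K n) (u : Fin n →₀ ℕ) (k : Fin n) :
    dm D (u + Finsupp.single k 1) = D.l k (u k) * dm D u := by
  classical
  rw [dm_apply, dm_apply]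
  have key : ∀ i : Fin n, ∏ j ∈ Finset.range ((u + Finsupp.single k 1 : Fin n →₀ ℕ) i), D.l i j
      = (if i = k then D.l k (u k) else 1) * ∏ j ∈ Finset.range (u i), D.l i j := by
    intro i
    by_cases hi : i = k
    · subst hi
      have h1 : (u + Finsupp.single i 1 : Fin n →₀ ℕ) i = u i + 1 := by simp
      rw [h1, Finset.prod_range_succ, if_pos rfl, mul_comm]
    · have h1 : (u + Finsupp.single k 1 : Fin n →₀ ℕ) i = u i := by
        simp [Finsupp.single_apply, Ne.symm hi]
      rw [h1, if_neg hi, one_mul]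
  rw [Finset.prod_congr rfl fun i _ => key i, Finset.prod_mul_distrib]
  simp

lemma dph_distractMon_factor (D : Distraction K n) {s u : Fin n →₀ ℕ} (h : s ≤ u) :
    ∃ r, dm D u = r * dm D s := by
  obtain ⟨t, rfl⟩ := exists_add_of_le h
  refine ⟨∏ i : Fin n, ∏ j ∈ Finset.range (t i), D.l i (s i + j), ?_⟩
  rw [dm_apply, dm_apply, ← Finset.prod_mul_distrib]
  refine Finset.prod_congr rfl fun i _ => ?_
  rw [Finsupp.add_apply, Finset.prod_range_add, mul_comm]

lemma dph_degree_add_single (u : Fin n →₀ ℕ) (k : Fin n) :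
    (u + Finsupp.single k 1 : Fin n →₀ ℕ).degree = u.degree + 1 := by
  rw [dph_degree_eq, dph_degree_eq]
  simp [Finsupp.single_apply, Finset.sum_add_distrib]

lemma dph_X_mul_mem (D : Distraction K n) (k : Fin n) (u : Fin n →₀ ℕ) :
    (X k : MvPolynomial (Fin n) K) * dm D u ∈
      Submodule.span K (dm D '' {w | u ≤ w ∧ w.degree = u.degree + 1}) := by
  have hX : (X k : MvPolynomial (Fin n) K) ∈
      Submodule.span K (Set.range fun i => D.l i (u i)) := by
    rw [D.span (fun i => u i)]
    exact isHomogeneous_X _ _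
  obtain ⟨c, hc⟩ := Submodule.mem_span_range_iff_exists_fun K |>.mp hX
  rw [← hc, Finset.sum_mul]
  refine Submodule.sum_mem _ fun i _ => ?_
  rw [smul_mul_assoc]
  refine Submodule.smul_mem _ _ (Submodule.subset_span ?_)
  refine ⟨u + Finsupp.single i 1, ⟨le_add_right le_rfl, dph_degree_add_single u i⟩, ?_⟩
  rw [dph_distractMon_add_single]

lemma dph_mul_mem (D : Distraction K n) (p : MvPolynomial (Fin n) K) (u : Fin n →₀ ℕ) :
    p * dm D u ∈ Submodule.span K (dm D '' {w | u ≤ w}) := by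
  induction p using MvPolynomial.induction_on generalizing u with
  | C a =>
    rw [MvPolynomial.C_mul']
    exact Submodule.smul_mem _ _ (Submodule.subset_span ⟨u, show u ≤ u from le_rfl, rfl⟩)
  | add p q hp hq =>
    rw [add_mul]
    exact Submodule.add_mem _ (hp u) (hq u)
  | mul_X p i hp =>
    rw [mul_assoc]
    have h1 := dph_X_mul_mem D i u
    have h2 : Submodule.span K (dm D '' {w | u ≤ w ∧ w.degree = u.degree + 1}) ≤
        Submodule.span K (dm D '' {w | u ≤ w}) :=
      Submodule.span_mono (Set.image_mono fun w hw => hw.1)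
    have key : ∀ x ∈ Submodule.span K (dm D '' {w | u ≤ w}),
        p * x ∈ Submodule.span K (dm D '' {w | u ≤ w}) := by
      intro x hx
      induction hx using Submodule.span_induction with
      | mem x hx =>
        obtain ⟨w, hw, rfl⟩ := hx
        exact Submodule.span_mono
          (Set.image_mono fun w' (hw' : w ≤ w') => le_trans hw hw') (hp w)
      | zero => rw [mul_zero]; exact Submodule.zero_mem _
      | add x y _ _ hx hy => rw [mul_add]; exact Submodule.add_mem _ hx hy
      | smul c x _ hx => rw [mul_smul_comm]; exact Submodule.smul_mem _ _ hx
    exact key _ (h2 h1)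

/-- The up-closure of a set of exponents. -/
def upSet (S : Set (Fin n →₀ ℕ)) : Set (Fin n →₀ ℕ) := {u | ∃ s ∈ S, s ≤ u}

lemma dph_ideal_span (D : Distraction K n) (S : Set (Fin n →₀ ℕ)) :
    (Ideal.span (dm D '' S)).restrictScalars K =
      Submodule.span K (dm D '' upSet S) := by
  have hmul : ∀ (a : MvPolynomial (Fin n) K) (x : MvPolynomial (Fin n) K),
      x ∈ Submodule.span K (dm D '' upSet S) →
      a * x ∈ Submodule.span K (dm D '' upSet S) := by
    intro a x hx
    induction hx using Submodule.span_induction with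
    | mem x hx =>
      obtain ⟨w, hw, rfl⟩ := hx
      refine Submodule.span_le.mpr ?_ (dph_mul_mem D a w)
      rintro _ ⟨w', hw', rfl⟩
      obtain ⟨s, hs, hsw⟩ := hw
      exact Submodule.subset_span ⟨w', ⟨s, hs, le_trans hsw hw'⟩, rfl⟩
    | zero => rw [mul_zero]; exact Submodule.zero_mem _
    | add x y _ _ hx hy => rw [mul_add]; exact Submodule.add_mem _ hx hy
    | smul c x _ hx => rw [mul_smul_comm]; exact Submodule.smul_mem _ _ hx
  apply le_antisymm
  · intro x hx
    have hx' : x ∈ Submodule.span (MvPolynomial (Fin n) K) (dm D '' S) := hx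
    clear hx
    induction hx' using Submodule.span_induction with
    | mem x hx =>
      obtain ⟨s, hs, rfl⟩ := hx
      exact Submodule.subset_span ⟨s, ⟨s, hs, le_rfl⟩, rfl⟩
    | zero => exact Submodule.zero_mem _
    | add x y _ _ hx hy => exact Submodule.add_mem _ hx hy
    | smul a x _ hx => rw [smul_eq_mul]; exact hmul a x hx
  · rw [Submodule.span_le]
    rintro _ ⟨u, ⟨s, hs, hsu⟩, rfl⟩
    obtain ⟨r, hr⟩ := dph_distractMon_factor D hsu
    show dm D u ∈ Ideal.span (dm D '' S)
    rw [hr]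
    exact Ideal.mul_mem_left _ _ (Ideal.subset_span ⟨s, hs, rfl⟩)

lemma dph_mon_span (T : Set (Fin n →₀ ℕ)) :
    Submodule.span K ((fun u => monomial u (1 : K)) '' T) = AddMonoidAlgebra.supported K K T := by
  have himg : ((fun u => monomial u (1 : K)) '' T) =
      ((fun i => (AddMonoidAlgebra.single i (1 : K) : MvPolynomial (Fin n) K)) '' T) :=
    Set.image_congr fun u _ => (MvPolynomial.single_eq_monomial u (1 : K)).symm
  rw [himg, ← AddMonoidAlgebra.supported_eq_span_single]

lemma dph_supported_inter (s t : Set (Fin n →₀ ℕ)) :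
    (AddMonoidAlgebra.supported K K (s ∩ t) : Submodule K (MvPolynomial (Fin n) K)) =
      AddMonoidAlgebra.supported K K s ⊓ AddMonoidAlgebra.supported K K t := by
  simp only [AddMonoidAlgebra.supported, Finsupp.supported_inter, Submodule.comap_inf]

lemma dph_homog_span (d : ℕ) :
    homogeneousSubmodule (Fin n) K d =
      Submodule.span K ((fun u => monomial u (1 : K)) '' {u | Finsupp.degree u = d}) := by
  rw [dph_mon_span, homogeneousSubmodule_eq_finsupp_supported]

lemma dph_X_mul_span (D : Distraction K n) (k : Fin n) (d : ℕ) (x : MvPolynomial (Fin n) K)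
    (hx : x ∈ Submodule.span K (dm D '' {w | Finsupp.degree w = d})) :
    (X k : MvPolynomial (Fin n) K) * x ∈
      Submodule.span K (dm D '' {w | Finsupp.degree w = d + 1}) := by
  induction hx using Submodule.span_induction with
  | mem x hx =>
    obtain ⟨w, hw, rfl⟩ := hx
    refine Submodule.span_mono (Set.image_mono fun w' hw' => ?_) (dph_X_mul_mem D k w)
    have : Finsupp.degree w' = Finsupp.degree w + 1 := hw'.2
    simp only [Set.mem_setOf_eq] at hw ⊢
    rw [this, hw]
  | zero => rw [mul_zero]; exact Submodule.zero_mem _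
  | add x y _ _ hx hy => rw [mul_add]; exact Submodule.add_mem _ hx hy
  | smul c x _ hx => rw [mul_smul_comm]; exact Submodule.smul_mem _ _ hx

lemma dph_mon_mem_span (D : Distraction K n) :
    ∀ (d : ℕ) (u : Fin n →₀ ℕ), Finsupp.degree u = d →
      (monomial u (1 : K)) ∈ Submodule.span K (dm D '' {w | Finsupp.degree w = d}) := by
  intro d
  induction d with
  | zero =>
    intro u hu
    rw [Finsupp.degree_eq_zero_iff] at hu
    subst hu
    have h1 : monomial (0 : Fin n →₀ ℕ) (1 : K) = dm D 0 := by
      rw [dph_distractMon_zero]; simp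
    rw [h1]
    exact Submodule.subset_span ⟨0, by simp, rfl⟩
  | succ d ih =>
    intro u hu
    have hne : u ≠ 0 := by
      intro h; rw [h] at hu; simp at hu
    have hk : ∃ k, u k ≠ 0 := by
      by_contra h
      push_neg at h
      exact hne (Finsupp.ext fun i => h i)
    obtain ⟨k, hk⟩ := hk
    have hle : Finsupp.single k 1 ≤ u := Finsupp.single_le_iff.mpr (Nat.one_le_iff_ne_zero.mpr hk)
    set u' := u - Finsupp.single k 1 with hu'
    have hsum : u' + Finsupp.single k 1 = u := tsub_add_cancel_of_le hle
    have hd : Finsupp.degree u' = d := by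
      have := dph_degree_add_single u' k
      rw [hsum, hu] at this
      omega
    have hmon : monomial u (1 : K) = (X k : MvPolynomial (Fin n) K) * monomial u' 1 := by
      rw [show (X k : MvPolynomial (Fin n) K) = monomial (Finsupp.single k 1) 1 from rfl,
        monomial_mul, one_mul, ← hsum, add_comm]
    rw [hmon]
    exact dph_X_mul_span D k d _ (ih u' hd)

lemma dph_span_deg (D : Distraction K n) (d : ℕ) :
    Submodule.span K (dm D '' {u | Finsupp.degree u = d}) =
      homogeneousSubmodule (Fin n) K d := by
  apply le_antisymm
  · rw [Submodule.span_le]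
    rintro _ ⟨u, hu, rfl⟩
    exact hu ▸ dph_distractMon_homog D u
  · rw [dph_homog_span, Submodule.span_le]
    rintro _ ⟨u, hu, rfl⟩
    exact dph_mon_mem_span D d u hu

/-- The linear endomorphism of `A` sending each monomial to its distraction. -/
def dphPhi (D : Distraction K n) : MvPolynomial (Fin n) K →ₗ[K] MvPolynomial (Fin n) K :=
  (MvPolynomial.basisMonomials (Fin n) K).constr K (dm D)

lemma dphPhi_mon (D : Distraction K n) (u : Fin n →₀ ℕ) :
    dphPhi D (monomial u (1 : K)) = dm D u := by
  have h := Module.Basis.constr_basis (MvPolynomial.basisMonomials (Fin n) K) K (dm D) u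
  rwa [congrFun (MvPolynomial.coe_basisMonomials (Fin n) K) u] at h

lemma dphPhi_map_span (D : Distraction K n) (T : Set (Fin n →₀ ℕ)) :
    Submodule.map (dphPhi D) (Submodule.span K ((fun u => monomial u (1 : K)) '' T)) =
      Submodule.span K (dm D '' T) := by
  rw [Submodule.map_span, ← Set.image_comp]
  congr 1
  exact Set.image_congr fun u _ => dphPhi_mon D u

lemma dphPhi_comm (D : Distraction K n) (d : ℕ) :
    (homogeneousComponent d) ∘ₗ (dphPhi D) = (dphPhi D) ∘ₗ (homogeneousComponent d) := by
  apply (MvPolynomial.basisMonomials (Fin n) K).ext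
  intro u
  rw [congrFun (MvPolynomial.coe_basisMonomials (Fin n) K) u]
  rw [LinearMap.comp_apply, LinearMap.comp_apply, dphPhi_mon,
    homogeneousComponent_of_mem (dph_distractMon_homog D u),
    homogeneousComponent_of_mem (isHomogeneous_monomial (1 : K) rfl)]
  split_ifs with h
  · rw [dphPhi_mon]
  · rw [map_zero]

instance dph_fd (d : ℕ) : FiniteDimensional K (homogeneousSubmodule (Fin n) K d) := by
  have hle : homogeneousSubmodule (Fin n) K d ≤ restrictTotalDegree (Fin n) K d := fun p hp =>
    (mem_restrictTotalDegree _ _ _).mpr (MvPolynomial.IsHomogeneous.totalDegree_le hp)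
  exact Submodule.finiteDimensional_of_le hle

lemma dphPhi_maps (D : Distraction K n) (d : ℕ) :
    ∀ x ∈ homogeneousSubmodule (Fin n) K d, dphPhi D x ∈ homogeneousSubmodule (Fin n) K d := by
  intro x hx
  rw [dph_homog_span] at hx
  have h : dphPhi D x ∈ Submodule.map (dphPhi D)
      (Submodule.span K ((fun u => monomial u (1 : K)) '' {u | Finsupp.degree u = d})) :=
    ⟨x, hx, rfl⟩
  rw [dphPhi_map_span] at h
  rw [← dph_span_deg D d]
  exact h

lemma dphPhi_surj_deg (D : Distraction K n) (d : ℕ) (y : MvPolynomial (Fin n) K)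
    (hy : y ∈ homogeneousSubmodule (Fin n) K d) :
    ∃ x ∈ homogeneousSubmodule (Fin n) K d, dphPhi D x = y := by
  rw [← dph_span_deg D d, ← dphPhi_map_span D] at hy
  obtain ⟨x, hx, rfl⟩ := hy
  exact ⟨x, by rwa [dph_homog_span], rfl⟩

lemma dphPhi_inj_deg (D : Distraction K n) (d : ℕ) (x : MvPolynomial (Fin n) K)
    (hx : x ∈ homogeneousSubmodule (Fin n) K d) (h : dphPhi D x = 0) : x = 0 := by
  let ψ := (dphPhi D).restrict (dphPhi_maps D d)
  have hsurj : Function.Surjective ψ := by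
    rintro ⟨y, hy⟩
    obtain ⟨x', hx', hxy⟩ := dphPhi_surj_deg D d y hy
    exact ⟨⟨x', hx'⟩, Subtype.ext hxy⟩
  have hinj : Function.Injective ψ := LinearMap.injective_iff_surjective.mpr hsurj
  have h0 : ψ ⟨x, hx⟩ = 0 := Subtype.ext h
  have h1 : (⟨x, hx⟩ : homogeneousSubmodule (Fin n) K d) = 0 := hinj (by rw [h0, map_zero])
  exact congrArg Subtype.val h1

lemma dphPhi_inj (D : Distraction K n) : Function.Injective (dphPhi D) := by
  rw [← LinearMap.ker_eq_bot, Submodule.eq_bot_iff]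
  intro f hf
  have hf0 : dphPhi D f = 0 := hf
  have hc : ∀ d, homogeneousComponent d f = 0 := by
    intro d
    have h1 : homogeneousComponent d (dphPhi D f) = dphPhi D (homogeneousComponent d f) :=
      congrFun (congrArg DFunLike.coe (dphPhi_comm D d)) f
    rw [hf0, map_zero] at h1
    exact dphPhi_inj_deg D d _ (homogeneousComponent_isHomogeneous d f) h1.symm
  calc f = ∑ i ∈ Finset.range (f.totalDegree + 1), homogeneousComponent i f :=
        (sum_homogeneousComponent f).symm
    _ = 0 := Finset.sum_eq_zero fun i _ => hc i

lemma dphPhi_surj (D : Distraction K n) : Function.Surjective (dphPhi D) := by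
  intro f
  have h : f ∈ LinearMap.range (dphPhi D) := by
    rw [← sum_homogeneousComponent f]
    refine Submodule.sum_mem _ fun i _ => ?_
    have h1 : homogeneousComponent i f ∈ Submodule.span K (dm D '' {u | Finsupp.degree u = i}) := by
      rw [dph_span_deg D i]
      exact homogeneousComponent_isHomogeneous i f
    rw [← dphPhi_map_span D] at h1
    obtain ⟨x, _, hx⟩ := h1
    exact ⟨x, hx⟩
  exact h

/-- `dphPhi` as a linear equivalence. -/
def dphEquiv (D : Distraction K n) :
    MvPolynomial (Fin n) K ≃ₗ[K] MvPolynomial (Fin n) K :=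
  LinearEquiv.ofBijective (dphPhi D) ⟨dphPhi_inj D, dphPhi_surj D⟩

lemma dph_inf_deg (D : Distraction K n) (S : Set (Fin n →₀ ℕ)) (d : ℕ) :
    (Ideal.span (dm D '' S)).restrictScalars K ⊓ homogeneousSubmodule (Fin n) K d =
      Submodule.span K (dm D '' (upSet S ∩ {u | Finsupp.degree u = d})) := by
  rw [dph_ideal_span, ← dph_span_deg D d, ← dphPhi_map_span D (upSet S),
    ← dphPhi_map_span D {u | Finsupp.degree u = d},
    ← Submodule.map_inf _ (dphPhi_inj D), dph_mon_span, dph_mon_span,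
    ← dph_supported_inter, ← dph_mon_span, dphPhi_map_span]

lemma dph_finrank_span (D : Distraction K n) (T : Set (Fin n →₀ ℕ)) :
    Module.finrank K (Submodule.span K (dm D '' T)) =
      Module.finrank K (Submodule.span K ((fun u => monomial u (1 : K)) '' T)) := by
  rw [← dphPhi_map_span D T]
  exact LinearEquiv.finrank_map_eq (dphEquiv D) _

lemma dph_rank_nullity (W p : Submodule K (MvPolynomial (Fin n) K)) [FiniteDimensional K p] :
    Module.finrank K (Submodule.map W.mkQ p) +
      Module.finrank K (W ⊓ p : Submodule K (MvPolynomial (Fin n) K)) = Module.finrank K p := by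
  have hrange : LinearMap.range (W.mkQ.comp p.subtype) = Submodule.map W.mkQ p := by
    rw [LinearMap.range_comp, Submodule.range_subtype]
  have hker : LinearMap.ker (W.mkQ.comp p.subtype) = Submodule.comap p.subtype (W ⊓ p) := by
    rw [LinearMap.ker_comp, Submodule.ker_mkQ]
    ext x
    simp [x.2]
  have h1 := LinearMap.finrank_range_add_finrank_ker (W.mkQ.comp p.subtype)
  rw [hrange, hker] at h1
  have h2 : Module.finrank K (Submodule.comap p.subtype (W ⊓ p)) =
      Module.finrank K (W ⊓ p : Submodule K (MvPolynomial (Fin n) K)) :=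
    (Submodule.comapSubtypeEquivOfLe (p := W ⊓ p) (q := p) inf_le_right).finrank_eq
  rw [h2] at h1
  exact h1

lemma dph_degree_one {u : Fin n →₀ ℕ} (h : u.degree = 1) : ∃ i, u = Finsupp.single i 1 := by
  have hne : u ≠ 0 := by
    intro h0; rw [h0] at h; simp at h
  have hsupp : u.support.Nonempty := Finsupp.support_nonempty_iff.mpr hne
  have hcard : u.support.card ≤ 1 := by
    have h1 : u.support.card = ∑ _i ∈ u.support, 1 := by simp
    have h2 : (∑ _i ∈ u.support, 1) ≤ ∑ i ∈ u.support, u i :=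
      Finset.sum_le_sum fun i hi => Nat.one_le_iff_ne_zero.mpr (Finsupp.mem_support_iff.mp hi)
    have h3 : (∑ i ∈ u.support, u i) = 1 := h
    omega
  have hcard1 : u.support.card = 1 := le_antisymm hcard (Finset.card_pos.mpr hsupp)
  obtain ⟨i, hi0, hf⟩ := Finsupp.card_support_eq_one.mp hcard1
  have hdeg : u.degree = u i := by
    conv_lhs => rw [hf]
    rw [Finsupp.degree_single]
  have hb1 : u i = 1 := by rw [hdeg] at h; exact h
  exact ⟨i, by rw [hf, hb1]⟩

/-- The trivial distraction, with all linear forms equal to the variables. -/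
def trivDist : Distraction K n where
  l i _ := X i
  homog i _ := isHomogeneous_X _ _
  span c := by
    apply le_antisymm
    · rw [Submodule.span_le]
      rintro _ ⟨i, rfl⟩
      exact isHomogeneous_X _ _
    · rw [dph_homog_span 1, Submodule.span_le]
      rintro _ ⟨u, hu, rfl⟩
      obtain ⟨i, hi⟩ := dph_degree_one hu
      refine Submodule.subset_span ⟨i, ?_⟩
      simp only [hi]
      rfl
  eventually := ⟨0, fun _ _ _ => rfl⟩

lemma trivDist_dm (u : Fin n →₀ ℕ) :
    dm (trivDist : Distraction K n) u = monomial u (1 : K) := by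
  rw [dm_apply]
  simp only [trivDist, Finset.prod_const, Finset.card_range]
  rw [monomial_eq, C_1, one_mul]
  exact (Finsupp.prod_fintype _ _ fun i => pow_zero _).symm

end DPHAux

/-- a distraction of a monomial ideal has the same Hilbert function. -/
theorem distraction_preserves_hilbert (a b : Ideal (MvPolynomial (Fin n) K))
    (D : Distraction K n) (h : IsDistractionOf K n b a D) :
    ∀ d : ℕ, ringHF K n a d = ringHF K n b d := by
  obtain ⟨S, ha, hb⟩ := h
  intro d
  have hdmD : dm D = D.distractMon := rfl
  have hda : a = Ideal.span (dm (trivDist : Distraction K n) '' S) := by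
    rw [ha, monIdeal]
    congr 1
    exact Set.image_congr fun u _ => (trivDist_dm u).symm
  have hdb : b = Ideal.span (dm D '' S) := by rw [hb, hdmD]
  have key : ∀ D' : Distraction K n,
      ringHF K n (Ideal.span (dm D' '' S)) d +
        Module.finrank K (Submodule.span K ((fun u => monomial u (1 : K)) ''
          (upSet S ∩ {u | Finsupp.degree u = d}))) =
      Module.finrank K (homogeneousSubmodule (Fin n) K d) := by
    intro D'
    have h1 := dph_rank_nullity ((Ideal.span (dm D' '' S)).restrictScalars K)
      (homogeneousSubmodule (Fin n) K d)
    rw [dph_inf_deg, dph_finrank_span] at h1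
    unfold ringHF
    exact h1
  have ka := key trivDist
  have kb := key D
  rw [← hda] at ka
  rw [← hdb] at kb
  omega

end
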